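/- Let X be a nonempty compact convex subset of a locally convex Hausdorff topological vector space, and let Φ : X → X be a continuous affine map. Then Φ has a fixed point. -/

import Mathlib

theorem continuous_affine_selfmap_has_fixed_point
    {E : Type*} [AddCommGroup E] [Module ℝ E] [TopologicalSpace E]
    [IsTopologicalAddGroup E] [ContinuousSMul ℝ E] [LocallyConvexSpace ℝ E]
    [T2Space E]
    (K : Set E) (hKne : K.Nonempty) (hKcomp : IsCompact K) (hKconv : Convex ℝ K)
    (Φ : E → E) (hmaps : Set.MapsTo Φ K K) (hcont : ContinuousOn Φ K)
    (haff : ∀ x ∈ K, ∀ y ∈ K, ∀ t : ℝ, 0 ≤ t → t ≤ 1 →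
      Φ (t • x + (1 - t) • y) = t • Φ x + (1 - t) • Φ y) :
    ∃ x ∈ K, Φ x = x := by
  classical
  obtain ⟨x₀, hx₀⟩ := hKne
  set p : ℕ → E := fun k => Φ^[k] x₀ with hp_def
  have hpK : ∀ k, p k ∈ K := by
    intro k
    induction k with
    | zero => exact hx₀
    | succ n ih =>
      simp only [hp_def, Function.iterate_succ_apply']
      exact hmaps ih
  -- the averaging operator
  set avg : (ℕ → E) → ℕ → E := fun q n => ((n : ℝ) + 1)⁻¹ • ∑ k ∈ Finset.range (n + 1), q k
    with havg_def
  have hpos : ∀ n : ℕ, (0:ℝ) < (n : ℝ) + 1 := fun n => by positivity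
  -- recurrence for avg
  have havg_rec : ∀ (q : ℕ → E) (n : ℕ),
      avg q (n + 1) = (((n:ℝ) + 2)⁻¹) • q (n + 1) + (1 - ((n:ℝ) + 2)⁻¹) • avg q n := by
    intro q n
    have h2 : ((n:ℝ) + 2) ≠ 0 := by positivity
    have h1 : ((n:ℝ) + 1) ≠ 0 := by positivity
    simp only [havg_def, Finset.sum_range_succ (n := n + 1)]
    rw [smul_smul]
    have : (1 - ((n:ℝ) + 2)⁻¹) * ((n:ℝ) + 1)⁻¹ = ((n:ℝ) + 2)⁻¹ := by
      field_simp
      ring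
    rw [this, smul_add]
    push_cast
    rw [add_comm]
    ring_nf
  set S : ℕ → E := avg p with hS_def
  set T : ℕ → E := avg (fun k => p (k + 1)) with hT_def
  have hSK : ∀ n, S n ∈ K := by
    intro n
    induction n with
    | zero =>
      simp only [hS_def, havg_def]
      simpa using hpK 0
    | succ n ih =>
      rw [hS_def, havg_rec p n]
      have ht0 : (0:ℝ) ≤ ((n:ℝ) + 2)⁻¹ := by positivity
      have ht1 : ((n:ℝ) + 2)⁻¹ ≤ 1 := by
        rw [inv_le_one_iff₀]; right; linarith [Nat.cast_nonneg (α := ℝ) n]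
      exact hKconv (hpK (n+1)) ih ht0 (by linarith) (by ring)
  -- Φ maps averages of p to averages of shifted p
  have hΦS : ∀ n, Φ (S n) = T n := by
    intro n
    induction n with
    | zero =>
      simp only [hS_def, hT_def, havg_def]
      simp [hp_def, Function.iterate_succ_apply']
    | succ n ih =>
      have ht0 : (0:ℝ) ≤ ((n:ℝ) + 2)⁻¹ := by positivity
      have ht1 : ((n:ℝ) + 2)⁻¹ ≤ 1 := by
        rw [inv_le_one_iff₀]; right; linarith [Nat.cast_nonneg (α := ℝ) n]
      rw [hS_def, havg_rec p n, haff _ (hpK (n+1)) _ (hSK n) _ ht0 ht1]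
      have hΦp : Φ (p (n + 1)) = p (n + 2) := by
        simp [hp_def, Function.iterate_succ_apply']
      rw [hΦp, ih, hT_def, havg_rec (fun k => p (k + 1)) n]
  -- key estimate: Φ (S n) - S n = (n+1)⁻¹ • (p (n+1) - p 0)
  have hdiff : ∀ n, Φ (S n) - S n = ((n:ℝ) + 1)⁻¹ • (p (n + 1) - p 0) := by
    intro n
    rw [hΦS, hT_def, hS_def, havg_def]
    simp only [← smul_sub]
    congr 1
    have h1 : ∑ k ∈ Finset.range (n + 1), p (k + 1) + p 0
        = ∑ k ∈ Finset.range (n + 1), p k + p (n + 1) := by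
      rw [← Finset.sum_range_succ']
      exact Finset.sum_range_succ p (n + 1)
    rw [sub_eq_sub_iff_add_eq_add, h1, add_comm]
  -- cluster point via ultrafilter
  set F : Ultrafilter ℕ := Ultrafilter.of Filter.atTop with hF_def
  have hFle : (F : Filter ℕ) ≤ Filter.atTop := Ultrafilter.of_le _
  have hmem : ∀ᶠ n in (F : Filter ℕ), S n ∈ K := Filter.Eventually.of_forall hSK
  obtain ⟨x, hxK, hxlim⟩ := hKcomp.ultrafilter_le_nhds (F.map S)
    (by rw [Ultrafilter.coe_map, Filter.le_principal_iff, Filter.mem_map]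
        exact Filter.Eventually.of_forall hSK)
  have hSx : Filter.Tendsto S (F : Filter ℕ) (nhds x) := hxlim
  have hSxW : Filter.Tendsto S (F : Filter ℕ) (nhdsWithin x K) := by
    rw [tendsto_nhdsWithin_iff]
    exact ⟨hSx, hmem⟩
  have hΦSx : Filter.Tendsto (fun n => Φ (S n)) (F : Filter ℕ) (nhds (Φ x)) :=
    (hcont x hxK).tendsto.comp hSxW
  -- every continuous linear functional agrees on Φ x and x
  have hkey : ∀ f : E →L[ℝ] ℝ, f (Φ x) = f x := by
    intro f
    obtain ⟨M, hM⟩ := hKcomp.exists_bound_of_continuousOn f.continuous.continuousOn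
    have hten : Filter.Tendsto (fun n => f (Φ (S n)) - f (S n)) Filter.atTop (nhds 0) := by
      have hbound : ∀ n : ℕ, ‖f (Φ (S n)) - f (S n)‖ ≤ ((n:ℝ) + 1)⁻¹ * (2 * M) := by
        intro n
        have : f (Φ (S n)) - f (S n) = ((n:ℝ) + 1)⁻¹ * (f (p (n + 1)) - f (p 0)) := by
          rw [← map_sub, hdiff n, map_smul]
          simp
        rw [this, norm_mul, Real.norm_eq_abs, abs_of_pos (by positivity : (0:ℝ) < ((n:ℝ)+1)⁻¹)]
        have h1 := hM _ (hpK (n + 1))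
        have h2 := hM _ (hpK 0)
        have : ‖f (p (n + 1)) - f (p 0)‖ ≤ 2 * M := by
          calc ‖f (p (n + 1)) - f (p 0)‖ ≤ ‖f (p (n+1))‖ + ‖f (p 0)‖ := norm_sub_le _ _
            _ ≤ 2 * M := by linarith
        exact mul_le_mul_of_nonneg_left this (by positivity)
      have hto : Filter.Tendsto (fun n : ℕ => ((n:ℝ) + 1)⁻¹ * (2 * M)) Filter.atTop (nhds 0) := by
        have h1 : Filter.Tendsto (fun n : ℕ => (n:ℝ) + 1) Filter.atTop Filter.atTop :=
          (tendsto_natCast_atTop_atTop (R := ℝ)).atTop_add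
            (tendsto_const_nhds (x := (1:ℝ)))
        simpa using h1.inv_tendsto_atTop.mul_const (2 * M)
      exact squeeze_zero_norm hbound hto
    have h1 : Filter.Tendsto (fun n => f (Φ (S n)) - f (S n)) (F : Filter ℕ)
        (nhds (f (Φ x) - f x)) :=
      ((f.continuous.tendsto _).comp hΦSx).sub ((f.continuous.tendsto _).comp hSx)
    have h2 : Filter.Tendsto (fun n => f (Φ (S n)) - f (S n)) (F : Filter ℕ) (nhds 0) :=
      hten.mono_left hFle
    have := tendsto_nhds_unique h1 h2
    linarith [this]
  refine ⟨x, hxK, ?_⟩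
  by_contra hne
  obtain ⟨f, hf⟩ := SeparatingDual.exists_separating_of_ne (R := ℝ) hne
  exact hf (hkey f)
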